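/- Let k be a commutative ring. The coordinate ring of the group scheme SL₂ over k, namely the quotient k[a,b,c,d]/(ad − bc − 1) of the polynomial ring in four variables by the ideal generated by ad − bc − 1, is a free k-module. -/

import Mathlib

open MvPolynomial

section TwoVarLemma

variable {R : Type*} [CommRing R] (u : R)

/-- The generator `xy - u`. -/
noncomputable abbrev sl2Gen : MvPolynomial (Fin 2) R := X 0 * X 1 - C u

noncomputable abbrev sl2Ideal : Ideal (MvPolynomial (Fin 2) R) := Ideal.span {sl2Gen u}

/-- The `R`-linear map sending the monomial `x^i y^j` to `u^(min i j) • e_(i-j)`. -/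
noncomputable def sl2Phi : MvPolynomial (Fin 2) R →ₗ[R] (ℤ →₀ R) :=
  (basisMonomials (Fin 2) R).constr ℕ fun m =>
    Finsupp.single ((m 0 : ℤ) - (m 1 : ℤ)) (u ^ min (m 0) (m 1))

theorem sl2Phi_monomial (m : Fin 2 →₀ ℕ) (r : R) :
    sl2Phi u (monomial m r) =
      Finsupp.single ((m 0 : ℤ) - (m 1 : ℤ)) (r * u ^ min (m 0) (m 1)) := by
  have h : (monomial m r : MvPolynomial (Fin 2) R) = r • basisMonomials (Fin 2) R m := by
    rw [coe_basisMonomials, smul_monomial, smul_eq_mul, mul_one]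
  rw [h, map_smul, sl2Phi, Module.Basis.constr_basis, Finsupp.smul_single, smul_eq_mul]

theorem sl2Phi_gen_mul (p : MvPolynomial (Fin 2) R) : sl2Phi u (sl2Gen u * p) = 0 := by
  induction p using MvPolynomial.induction_on' with
  | add p q hp hq => rw [mul_add, map_add, hp, hq, add_zero]
  | monomial m r =>
      have h1 : (sl2Gen u : MvPolynomial (Fin 2) R) * monomial m r =
          monomial (Finsupp.single 0 1 + Finsupp.single 1 1 + m) r - monomial m (u * r) := by
        rw [sl2Gen, sub_mul]
        congr 1
        · rw [X, X, monomial_mul, monomial_mul, one_mul, one_mul]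
        · rw [C_apply, monomial_mul, zero_add]
      rw [h1, map_sub, sl2Phi_monomial, sl2Phi_monomial]
      have h0 : ((Finsupp.single 0 1 + Finsupp.single 1 1 + m : Fin 2 →₀ ℕ) 0) = m 0 + 1 := by
        simp [Finsupp.single_apply]; omega
      have h1' : ((Finsupp.single 0 1 + Finsupp.single 1 1 + m : Fin 2 →₀ ℕ) 1) = m 1 + 1 := by
        simp [Finsupp.single_apply]; omega
      rw [h0, h1']
      have hmin : min (m 0 + 1) (m 1 + 1) = min (m 0) (m 1) + 1 := by omega
      rw [hmin, sub_eq_zero]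
      congr 1
      · push_cast; ring
      · rw [pow_succ]; ring

theorem sl2Phi_vanish (p : MvPolynomial (Fin 2) R) (hp : p ∈ sl2Ideal u) : sl2Phi u p = 0 := by
  rw [sl2Ideal, Ideal.mem_span_singleton] at hp
  obtain ⟨h, rfl⟩ := hp
  exact sl2Phi_gen_mul u h

/-- Candidate basis vectors: `e_n ↦ x^n` for `n ≥ 0`, `e_n ↦ y^(-n)` for `n < 0`. -/
noncomputable def sl2G (n : ℤ) : MvPolynomial (Fin 2) R :=
  if 0 ≤ n then X 0 ^ n.toNat else X 1 ^ (-n).toNat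

theorem sl2Phi_sl2G (n : ℤ) : sl2Phi u (sl2G n) = Finsupp.single n 1 := by
  rw [sl2G]
  split_ifs with h
  · rw [X_pow_eq_monomial, sl2Phi_monomial]
    have e0 : (Finsupp.single (0 : Fin 2) n.toNat) 0 = n.toNat := by simp
    have e1 : (Finsupp.single (0 : Fin 2) n.toNat) 1 = 0 := by simp
    rw [e0, e1]
    have : ((n.toNat : ℤ) - (0 : ℕ)) = n := by omega
    rw [this]
    simp
  · rw [X_pow_eq_monomial, sl2Phi_monomial]
    have e0 : (Finsupp.single (1 : Fin 2) (-n).toNat) 0 = 0 := by simp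
    have e1 : (Finsupp.single (1 : Fin 2) (-n).toNat) 1 = (-n).toNat := by simp
    rw [e0, e1]
    have : (((0:ℕ) : ℤ) - ((-n).toNat : ℤ)) = n := by omega
    rw [this]
    simp

noncomputable def sl2Psi0 : (ℤ →₀ R) →ₗ[R] MvPolynomial (Fin 2) R :=
  Finsupp.linearCombination R sl2G

theorem sl2Phi_psi0 (f : ℤ →₀ R) : sl2Phi u (sl2Psi0 f) = f := by
  have h : (sl2Phi u).comp (sl2Psi0 (R := R)) = LinearMap.id := by
    apply Finsupp.lhom_ext
    intro n r
    rw [LinearMap.comp_apply, sl2Psi0, Finsupp.linearCombination_single, map_smul,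
      sl2Phi_sl2G, LinearMap.id_apply, Finsupp.smul_single, smul_eq_mul, mul_one]
  calc sl2Phi u (sl2Psi0 f) = ((sl2Phi u).comp sl2Psi0) f := rfl
    _ = f := by rw [h]; rfl

noncomputable def sl2Psi : (ℤ →₀ R) →ₗ[R] (MvPolynomial (Fin 2) R ⧸ sl2Ideal u) :=
  (Ideal.Quotient.mkₐ R (sl2Ideal u)).toLinearMap.comp sl2Psi0

theorem sl2Psi_apply (f : ℤ →₀ R) :
    sl2Psi u f = Ideal.Quotient.mk (sl2Ideal u) (sl2Psi0 f) := rfl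

theorem sl2Psi_injective : Function.Injective (sl2Psi u) := by
  intro f g hfg
  have h : sl2Psi0 (f - g) ∈ sl2Ideal u := by
    rw [← Ideal.Quotient.eq_zero_iff_mem]
    have : sl2Psi u (f - g) = 0 := by rw [map_sub, hfg, sub_self]
    rw [← sl2Psi_apply]; exact this
  have := sl2Phi_vanish u _ h
  rw [sl2Phi_psi0] at this
  exact sub_eq_zero.mp this

theorem sl2_mk_XX_pow (t : ℕ) :
    Ideal.Quotient.mk (sl2Ideal u) ((X 0 : MvPolynomial (Fin 2) R) ^ t * X 1 ^ t) =
      Ideal.Quotient.mk (sl2Ideal u) (C (u ^ t)) := by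
  induction t with
  | zero => simp
  | succ t ih =>
      have h : (X 0 : MvPolynomial (Fin 2) R) ^ (t + 1) * X 1 ^ (t + 1) =
          (X 0 ^ t * X 1 ^ t) * (X 0 * X 1) := by ring
      have hrel : Ideal.Quotient.mk (sl2Ideal u) ((X 0 : MvPolynomial (Fin 2) R) * X 1) =
          Ideal.Quotient.mk (sl2Ideal u) (C u) := by
        rw [Ideal.Quotient.eq]
        exact Ideal.subset_span rfl
      rw [h, map_mul, ih, hrel, ← map_mul, ← C_mul, ← pow_succ]

theorem sl2_mk_monomial_key (a b : ℕ) :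
    Ideal.Quotient.mk (sl2Ideal u) ((X 0 : MvPolynomial (Fin 2) R) ^ a * X 1 ^ b) =
      u ^ min a b • Ideal.Quotient.mk (sl2Ideal u) (sl2G ((a : ℤ) - (b : ℤ))) := by
  have hsmul : ∀ (t : ℕ) (w : MvPolynomial (Fin 2) R),
      u ^ t • Ideal.Quotient.mk (sl2Ideal u) w =
        Ideal.Quotient.mk (sl2Ideal u) (C (u ^ t) * w) := by
    intro t w
    rw [← smul_eq_C_mul, ← Ideal.Quotient.mkₐ_eq_mk R, ← map_smul]
  rcases le_total a b with hab | hab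
  · have hmin : min a b = a := by omega
    have hsplit : (X 1 : MvPolynomial (Fin 2) R) ^ b = X 1 ^ a * X 1 ^ (b - a) := by
      rw [← pow_add]; congr 1; omega
    have hg : (sl2G ((a : ℤ) - (b : ℤ)) : MvPolynomial (Fin 2) R) = X 1 ^ (b - a) ∨
        ((a : ℤ) - b = 0 ∧ b - a = 0) := by
      rw [sl2G]
      split_ifs with h
      · right; constructor <;> omega
      · left; congr 1; omega
    rw [hmin, hsmul]
    have : (X 0 : MvPolynomial (Fin 2) R) ^ a * X 1 ^ b =
        (X 0 ^ a * X 1 ^ a) * X 1 ^ (b - a) := by rw [hsplit]; ring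
    rw [this, map_mul, sl2_mk_XX_pow, ← map_mul]
    rcases hg with hg | ⟨h1, h2⟩
    · rw [hg]
    · rw [h2, h1, sl2G]
      norm_num
  · have hmin : min a b = b := by omega
    have hg : (sl2G ((a : ℤ) - (b : ℤ)) : MvPolynomial (Fin 2) R) = X 0 ^ (a - b) := by
      rw [sl2G, if_pos (by omega)]
      congr 1; omega
    rw [hmin, hsmul, hg]
    have hsplit : (X 0 : MvPolynomial (Fin 2) R) ^ a = X 0 ^ b * X 0 ^ (a - b) := by
      rw [← pow_add]; congr 1; omega
    have : (X 0 : MvPolynomial (Fin 2) R) ^ a * X 1 ^ b =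
        (X 0 ^ b * X 1 ^ b) * X 0 ^ (a - b) := by rw [hsplit]; ring
    rw [this, map_mul, sl2_mk_XX_pow, ← map_mul]

theorem sl2Psi_surjective : Function.Surjective (sl2Psi u) := by
  have key : ∀ p : MvPolynomial (Fin 2) R,
      Ideal.Quotient.mk (sl2Ideal u) p ∈ LinearMap.range (sl2Psi u) := by
    intro p
    induction p using MvPolynomial.induction_on' with
    | add p q hp hq => rw [map_add]; exact Submodule.add_mem _ hp hq
    | monomial m r =>
        have hm : (monomial m r : MvPolynomial (Fin 2) R) =
            r • (X 0 ^ (m 0) * X 1 ^ (m 1)) := by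
          have hmeq : m = Finsupp.single 0 (m 0) + Finsupp.single 1 (m 1) := by
            ext i; fin_cases i <;> simp [Finsupp.single_apply]
          rw [X_pow_eq_monomial, X_pow_eq_monomial, monomial_mul, mul_one, smul_monomial,
            smul_eq_mul, mul_one, ← hmeq]
        rw [hm, ← Ideal.Quotient.mkₐ_eq_mk R, map_smul, Ideal.Quotient.mkₐ_eq_mk R]
        refine Submodule.smul_mem _ r ?_
        rw [sl2_mk_monomial_key]
        refine Submodule.smul_mem _ _ ?_
        exact ⟨Finsupp.single ((m 0 : ℤ) - (m 1 : ℤ)) 1, by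
          rw [sl2Psi_apply, sl2Psi0, Finsupp.linearCombination_single, one_smul]⟩
  intro y
  obtain ⟨p, rfl⟩ := Ideal.Quotient.mk_surjective y
  exact key p

/-- `R[x,y]/(xy - u)` is a free `R`-module. -/
theorem sl2_free_twoVar : Module.Free R (MvPolynomial (Fin 2) R ⧸ sl2Ideal u) :=
  Module.Free.of_equiv
    (LinearEquiv.ofBijective (sl2Psi u) ⟨sl2Psi_injective u, sl2Psi_surjective u⟩)

end TwoVarLemma

/-- The index equivalence splitting variables `{a,d}` and `{b,c}`. -/
def sl2IdxEquiv : Fin 2 ⊕ Fin 2 ≃ Fin 4 where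
  toFun := Sum.elim ![0, 3] ![1, 2]
  invFun := ![Sum.inl 0, Sum.inr 0, Sum.inr 1, Sum.inl 1]
  left_inv := by rintro (i | i) <;> fin_cases i <;> rfl
  right_inv := by intro i; fin_cases i <;> rfl

/-- For any commutative ring `k`, the coordinate ring
`k[SL₂] = k[a,b,c,d]/(ad − bc − 1)` of the group scheme `SL₂` over `k`
is a free `k`-module. -/
theorem coordinateRing_SL2_free (k : Type*) [CommRing k] :
    Module.Free k
      (MvPolynomial (Fin 4) k ⧸
        Ideal.span {(X 0 : MvPolynomial (Fin 4) k) * X 3 - X 1 * X 2 - 1}) := by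
  classical
  set R : Type _ := MvPolynomial (Fin 2) k with hR
  set u : R := X 0 * X 1 + 1 with hu
  -- the algebra equivalence
  let E : MvPolynomial (Fin 2) R ≃ₐ[k] MvPolynomial (Fin 4) k :=
    (sumAlgEquiv k (Fin 2) (Fin 2)).symm.trans (renameEquiv k sl2IdxEquiv)
  have hEX : ∀ i : Fin 2, E (X i) = X (sl2IdxEquiv (Sum.inl i)) := by
    intro i
    have h1 : (sumAlgEquiv k (Fin 2) (Fin 2)).symm (X i) = X (Sum.inl i) := by
      rw [AlgEquiv.symm_apply_eq]
      exact (sumAlgEquiv_X_inl k (Fin 2) (Fin 2) i).symm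
    show renameEquiv k sl2IdxEquiv ((sumAlgEquiv k (Fin 2) (Fin 2)).symm (X i)) = _
    rw [h1, renameEquiv_apply, rename_X]
  have hEC : ∀ i : Fin 2, E (C (X i)) = X (sl2IdxEquiv (Sum.inr i)) := by
    intro i
    have h1 : (sumAlgEquiv k (Fin 2) (Fin 2)).symm (C (X i)) = X (Sum.inr i) := by
      rw [AlgEquiv.symm_apply_eq]
      exact (sumAlgEquiv_X_inr k (Fin 2) (Fin 2) i).symm
    show renameEquiv k sl2IdxEquiv ((sumAlgEquiv k (Fin 2) (Fin 2)).symm (C (X i))) = _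
    rw [h1, renameEquiv_apply, rename_X]
  have hEgen : E (sl2Gen u) = (X 0 : MvPolynomial (Fin 4) k) * X 3 - X 1 * X 2 - 1 := by
    have hCu : (C u : MvPolynomial (Fin 2) R) = C (X 0) * C (X 1) + 1 := by
      rw [hu, map_add, map_mul, map_one]
    rw [sl2Gen, hCu, map_sub, map_mul, map_add, map_mul, map_one, hEX, hEX, hEC, hEC]
    show (X (0:Fin 4) : MvPolynomial (Fin 4) k) * X 3 - (X 1 * X 2 + 1) = _
    ring
  have hmap : Ideal.span {(X 0 : MvPolynomial (Fin 4) k) * X 3 - X 1 * X 2 - 1} =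
      Ideal.map (↑E : MvPolynomial (Fin 2) R →+* MvPolynomial (Fin 4) k) (sl2Ideal u) := by
    rw [sl2Ideal, Ideal.map_span, Set.image_singleton]
    congr 1
    rw [show ((↑E : MvPolynomial (Fin 2) R →+* MvPolynomial (Fin 4) k) (sl2Gen u)) =
      E (sl2Gen u) from rfl, hEgen]
  let e := Ideal.quotientEquivAlg (sl2Ideal u)
    (Ideal.span {(X 0 : MvPolynomial (Fin 4) k) * X 3 - X 1 * X 2 - 1}) E hmap
  have hfreeR : Module.Free R (MvPolynomial (Fin 2) R ⧸ sl2Ideal u) := sl2_free_twoVar u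
  have hfreek : Module.Free k (MvPolynomial (Fin 2) R ⧸ sl2Ideal u) := by
    let b1 := Module.Free.chooseBasis k R
    let b2 := hfreeR.chooseBasis
    exact Module.Free.of_basis (b1.smulTower b2)
  exact Module.Free.of_equiv e.toLinearEquiv
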